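/- Let γ ∈ (0,1) and define p_t(b) by p₁(b) = (γb/(γb+1))^γ and p_t(b) = [ p_{t-1}(γb+1) · γb / (γb + 1 - p_{t-1}(γb+1)) ]^γ. Then p₂(b) ≥ p₁(b) for every b > 0. -/

import Mathlib

open Real

/-- Key inequality: for `0 < γ < 1` and `c > 0`, `(γc/(γc+1))^γ ≥ c/(c+1)`. -/
lemma pgss_key (γ : ℝ) (hγ0 : 0 < γ) (hγ1 : γ < 1) (c : ℝ) (hc : 0 < c) :
    c / (c + 1) ≤ (γ * c / (γ * c + 1)) ^ γ := by
  set u := γ * c with hu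
  have hu0 : 0 < u := by positivity
  have h1u : (0:ℝ) < 1 + 1 / u := by positivity
  -- Bernoulli: (1 + 1/u)^γ ≤ 1 + γ/u
  have hinv : (0:ℝ) < 1 / u := by positivity
  have hbern : (1 + 1 / u) ^ γ ≤ 1 + γ * (1 / u) :=
    rpow_one_add_le_one_add_mul_self (by linarith) hγ0.le hγ1.le
  have hbase : u / (u + 1) = (1 + 1 / u)⁻¹ := by
    field_simp
  have hrw : (u / (u + 1)) ^ γ = ((1 + 1 / u) ^ γ)⁻¹ := by
    rw [hbase, Real.inv_rpow h1u.le]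
  rw [hrw]
  have h2 : (0:ℝ) < 1 + γ * (1 / u) := by positivity
  have h3 : (1 + γ * (1 / u))⁻¹ ≤ ((1 + 1 / u) ^ γ)⁻¹ := by
    apply inv_anti₀
    · positivity
    · exact hbern
  refine le_trans ?_ h3
  -- c/(c+1) ≤ (1 + γ/u)⁻¹ ; in fact equality since u = γc
  have : (1 + γ * (1 / u))⁻¹ = c / (c + 1) := by
    rw [hu]
    field_simp
  rw [this]

theorem pgss_p2_ge_p1 (γ : ℝ) (hγ0 : 0 < γ) (hγ1 : γ < 1)
    (p : ℕ → ℝ → ℝ)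
    (h1 : ∀ b : ℝ, 0 < b → p 1 b = (γ * b / (γ * b + 1)) ^ γ)
    (hrec : ∀ t : ℕ, 1 ≤ t → ∀ b : ℝ, 0 < b →
      p (t + 1) b = (p t (γ * b + 1) * (γ * b) / (γ * b + 1 - p t (γ * b + 1))) ^ γ) :
    ∀ b : ℝ, 0 < b → p 2 b ≥ p 1 b := by
  intro b hb
  set x := γ * b with hx
  have hx0 : 0 < x := by positivity
  have hb1 : 0 < x + 1 := by linarith
  have hq : p 1 (γ * b + 1) = (γ * (x + 1) / (γ * (x + 1) + 1)) ^ γ := h1 _ (by positivity)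
  set q := p 1 (γ * b + 1) with hqdef
  have hqpos : 0 < q := by
    rw [hq]; positivity
  have hqlt1 : q < 1 := by
    rw [hq]
    apply Real.rpow_lt_one (by positivity) _ hγ0
    rw [div_lt_one (by positivity)]
    linarith
  have hqkey : (x + 1) / (x + 1 + 1) ≤ q := by
    rw [hq]; exact pgss_key γ hγ0 hγ1 (x + 1) hb1
  have h2 : p 2 b = (q * x / (x + 1 - q)) ^ γ := by
    have := hrec 1 le_rfl b hb
    rw [this]
  rw [h2, h1 b hb, ← hx, ge_iff_le]
  apply Real.rpow_le_rpow (by positivity) _ hγ0.le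
  have hden : 0 < x + 1 - q := by linarith
  rw [div_le_div_iff₀ hb1 hden]
  have : x + 1 ≤ q * (x + 2) := by
    have := (div_le_iff₀ (by linarith : (0:ℝ) < x + 1 + 1)).mp hqkey
    linarith
  nlinarith
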